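/- Let PAR(x,P) = Q·(exp(−(k_{go} + k_{gp} (cP)^{l_g}) x) + exp(−(k_{ro} + k_{rp} (cP)^{l_r}) x)) with Q ≥ 0, and L_I(x,P) = 1 − exp(−PAR(x,P)/k_{par}). Then for all x ∈ [0,L] and P, P̂ ≥ 0, |P·L_I(x,P) − P̂·L_I(x,P̂)| ≤ K_I(P, P̂)|P − P̂|, where K_I(P,P̂) = 1 + (Q·L/k_{par})·(k_{gp} l_g c^{l_g} max(P,P̂)^{l_g} + k_{rp} l_r c^{l_r} max(P,P̂)^{l_r}). -/

import Mathlib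

open Set

theorem aux_11 (Q L k_par k_go k_ro k_gp k_rp l_g l_r c : ℝ)
    (hQ : 0 ≤ Q) (hL : 0 < L) (hkpar : 0 < k_par)
    (hkgo : 0 < k_go) (hkro : 0 < k_ro) (hkgp : 0 < k_gp) (hkrp : 0 < k_rp)
    (hlg0 : 0 < l_g) (hlr0 : 0 < l_r) (hc : 0 < c)
    (x : ℝ) (hx : x ∈ Icc (0 : ℝ) L) (P Phat : ℝ) (hP : 0 ≤ P) (hPhat : 0 ≤ Phat)
    (hle : Phat ≤ P) :
    |P * (1 - Real.exp (-(Q * (Real.exp (-(k_go + k_gp * (c * P) ^ l_g) * x)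
          + Real.exp (-(k_ro + k_rp * (c * P) ^ l_r) * x))) / k_par))
      - Phat * (1 - Real.exp (-(Q * (Real.exp (-(k_go + k_gp * (c * Phat) ^ l_g) * x)
          + Real.exp (-(k_ro + k_rp * (c * Phat) ^ l_r) * x))) / k_par))| ≤
    (1 + Q * L / k_par *
        (k_gp * l_g * c ^ l_g * P ^ l_g + k_rp * l_r * c ^ l_r * P ^ l_r)) * (P - Phat) := by
  obtain ⟨hx0, hxL⟩ := hx
  have hPg : (0:ℝ) ≤ P ^ l_g := Real.rpow_nonneg hP _
  have hPr : (0:ℝ) ≤ P ^ l_r := Real.rpow_nonneg hP _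
  have hKnn : (0:ℝ) ≤ Q * L / k_par *
      (k_gp * l_g * c ^ l_g * P ^ l_g + k_rp * l_r * c ^ l_r * P ^ l_r) := by
    apply mul_nonneg (by positivity)
    apply add_nonneg <;> apply mul_nonneg (by positivity) <;> assumption
  rcases eq_or_lt_of_le hPhat with h0 | h0
  · -- Phat = 0
    subst h0
    simp only [zero_mul, sub_zero]
    have hE1 : Real.exp (-(Q * (Real.exp (-(k_go + k_gp * (c * P) ^ l_g) * x)
        + Real.exp (-(k_ro + k_rp * (c * P) ^ l_r) * x))) / k_par) ≤ 1 := by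
      rw [Real.exp_le_one_iff]
      apply div_nonpos_of_nonpos_of_nonneg _ hkpar.le
      simp only [neg_nonpos]
      positivity
    have hE0 : (0:ℝ) < Real.exp (-(Q * (Real.exp (-(k_go + k_gp * (c * P) ^ l_g) * x)
        + Real.exp (-(k_ro + k_rp * (c * P) ^ l_r) * x))) / k_par) := Real.exp_pos _
    rw [abs_of_nonneg (by nlinarith)]
    nlinarith
  · -- 0 < Phat
    set f : ℝ → ℝ := fun t => t * (1 - Real.exp (-(Q * (Real.exp (-(k_go + k_gp * (c * t) ^ l_g) * x)
          + Real.exp (-(k_ro + k_rp * (c * t) ^ l_r) * x))) / k_par)) with hf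
    set f' : ℝ → ℝ := fun t =>
      1 * (1 - Real.exp (-(Q * (Real.exp (-(k_go + k_gp * (c * t) ^ l_g) * x)
          + Real.exp (-(k_ro + k_rp * (c * t) ^ l_r) * x))) / k_par))
      + t * (-(Real.exp (-(Q * (Real.exp (-(k_go + k_gp * (c * t) ^ l_g) * x)
          + Real.exp (-(k_ro + k_rp * (c * t) ^ l_r) * x))) / k_par)
        * (-(Q * (Real.exp (-(k_go + k_gp * (c * t) ^ l_g) * x)
              * (-(k_gp * (l_g * (c * t) ^ (l_g - 1) * c)) * x)
            + Real.exp (-(k_ro + k_rp * (c * t) ^ l_r) * x)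
              * (-(k_rp * (l_r * (c * t) ^ (l_r - 1) * c)) * x))) / k_par))) with hf'
    have hderiv : ∀ t ∈ Icc Phat P, HasDerivAt f (f' t) t := by
      intro t ht
      have ht0 : 0 < t := lt_of_lt_of_le h0 ht.1
      have hct : 0 < c * t := by positivity
      have h1 : HasDerivAt (fun s : ℝ => c * s) c t := by
        simpa using (hasDerivAt_id t).const_mul c
      have hg : HasDerivAt (fun s : ℝ => (c * s) ^ l_g) (l_g * (c * t) ^ (l_g - 1) * c) t := by
        have h2 := Real.hasDerivAt_rpow_const (x := c * t) (p := l_g) (Or.inl hct.ne')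
        have h3 := h2.comp t h1
        exact h3
      have hr : HasDerivAt (fun s : ℝ => (c * s) ^ l_r) (l_r * (c * t) ^ (l_r - 1) * c) t := by
        have h2 := Real.hasDerivAt_rpow_const (x := c * t) (p := l_r) (Or.inl hct.ne')
        have h3 := h2.comp t h1
        exact h3
      have hexpA := ((((hg.const_mul k_gp).const_add k_go).neg).mul_const x).exp
      have hexpB := ((((hr.const_mul k_rp).const_add k_ro).neg).mul_const x).exp
      exact (hasDerivAt_id' t).mul
        (((((hexpA.add hexpB).const_mul Q).neg.div_const k_par).exp).const_sub 1)
    have hbound : ∀ t ∈ Icc Phat P, ‖f' t‖ ≤ 1 + Q * L / k_par *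
        (k_gp * l_g * c ^ l_g * P ^ l_g + k_rp * l_r * c ^ l_r * P ^ l_r) := by
      intro t ht
      have ht0 : 0 < t := lt_of_lt_of_le h0 ht.1
      have hct : 0 < c * t := by positivity
      have hEle : Real.exp (-(Q * (Real.exp (-(k_go + k_gp * (c * t) ^ l_g) * x)
          + Real.exp (-(k_ro + k_rp * (c * t) ^ l_r) * x))) / k_par) ≤ 1 := by
        rw [Real.exp_le_one_iff]
        apply div_nonpos_of_nonpos_of_nonneg _ hkpar.le
        simp only [neg_nonpos]
        positivity
      have heA : Real.exp (-(k_go + k_gp * (c * t) ^ l_g) * x) ≤ 1 := by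
        rw [Real.exp_le_one_iff]
        have : (0:ℝ) ≤ (k_go + k_gp * (c * t) ^ l_g) * x := by positivity
        linarith
      have heB : Real.exp (-(k_ro + k_rp * (c * t) ^ l_r) * x) ≤ 1 := by
        rw [Real.exp_le_one_iff]
        have : (0:ℝ) ≤ (k_ro + k_rp * (c * t) ^ l_r) * x := by positivity
        linarith
      have hkey_g : (c * t) ^ (l_g - 1) * (c * t) ≤ c ^ l_g * P ^ l_g := by
        have h1 : (c * t) ^ (l_g - 1) * (c * t) = (c * t) ^ l_g := by
          conv_rhs => rw [show l_g = l_g - 1 + 1 from by ring]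
          rw [Real.rpow_add_one hct.ne']
        rw [h1, Real.mul_rpow hc.le ht0.le]
        exact mul_le_mul_of_nonneg_left
          (Real.rpow_le_rpow ht0.le ht.2 hlg0.le) (Real.rpow_nonneg hc.le _)
      have hkey_r : (c * t) ^ (l_r - 1) * (c * t) ≤ c ^ l_r * P ^ l_r := by
        have h1 : (c * t) ^ (l_r - 1) * (c * t) = (c * t) ^ l_r := by
          conv_rhs => rw [show l_r = l_r - 1 + 1 from by ring]
          rw [Real.rpow_add_one hct.ne']
        rw [h1, Real.mul_rpow hc.le ht0.le]
        exact mul_le_mul_of_nonneg_left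
          (Real.rpow_le_rpow ht0.le ht.2 hlr0.le) (Real.rpow_nonneg hc.le _)
      have hrw : f' t =
          (1 - Real.exp (-(Q * (Real.exp (-(k_go + k_gp * (c * t) ^ l_g) * x)
            + Real.exp (-(k_ro + k_rp * (c * t) ^ l_r) * x))) / k_par))
          - Q / k_par *
            (k_gp * l_g * (Real.exp (-(Q * (Real.exp (-(k_go + k_gp * (c * t) ^ l_g) * x)
                + Real.exp (-(k_ro + k_rp * (c * t) ^ l_r) * x))) / k_par)
              * Real.exp (-(k_go + k_gp * (c * t) ^ l_g) * x) * x
              * ((c * t) ^ (l_g - 1) * (c * t)))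
            + k_rp * l_r * (Real.exp (-(Q * (Real.exp (-(k_go + k_gp * (c * t) ^ l_g) * x)
                + Real.exp (-(k_ro + k_rp * (c * t) ^ l_r) * x))) / k_par)
              * Real.exp (-(k_ro + k_rp * (c * t) ^ l_r) * x) * x
              * ((c * t) ^ (l_r - 1) * (c * t)))) := by
        simp only [hf']
        field_simp
        ring
      have hmono : Q / k_par * (k_gp * l_g * (Real.exp (-(Q * (Real.exp (-(k_go + k_gp * (c * t) ^ l_g) * x)
                + Real.exp (-(k_ro + k_rp * (c * t) ^ l_r) * x))) / k_par)
              * Real.exp (-(k_go + k_gp * (c * t) ^ l_g) * x) * x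
              * ((c * t) ^ (l_g - 1) * (c * t)))
            + k_rp * l_r * (Real.exp (-(Q * (Real.exp (-(k_go + k_gp * (c * t) ^ l_g) * x)
                + Real.exp (-(k_ro + k_rp * (c * t) ^ l_r) * x))) / k_par)
              * Real.exp (-(k_ro + k_rp * (c * t) ^ l_r) * x) * x
              * ((c * t) ^ (l_r - 1) * (c * t))))
          ≤ Q / k_par * (k_gp * l_g * (1 * 1 * L * (c ^ l_g * P ^ l_g))
            + k_rp * l_r * (1 * 1 * L * (c ^ l_r * P ^ l_r))) := by
        gcongr <;> first
          | positivity
          | exact hEle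
          | exact heA
          | exact heB
          | exact hxL
          | exact hkey_g
          | exact hkey_r
          | exact (Real.exp_pos _).le
      have h2 : (0:ℝ) ≤ Q / k_par * (k_gp * l_g * (Real.exp (-(Q * (Real.exp (-(k_go + k_gp * (c * t) ^ l_g) * x)
                + Real.exp (-(k_ro + k_rp * (c * t) ^ l_r) * x))) / k_par)
              * Real.exp (-(k_go + k_gp * (c * t) ^ l_g) * x) * x
              * ((c * t) ^ (l_g - 1) * (c * t)))
            + k_rp * l_r * (Real.exp (-(Q * (Real.exp (-(k_go + k_gp * (c * t) ^ l_g) * x)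
                + Real.exp (-(k_ro + k_rp * (c * t) ^ l_r) * x))) / k_par)
              * Real.exp (-(k_ro + k_rp * (c * t) ^ l_r) * x) * x
              * ((c * t) ^ (l_r - 1) * (c * t)))) := by positivity
      have hE0 : (0:ℝ) < Real.exp (-(Q * (Real.exp (-(k_go + k_gp * (c * t) ^ l_g) * x)
          + Real.exp (-(k_ro + k_rp * (c * t) ^ l_r) * x))) / k_par) := Real.exp_pos _
      have hEq : Q / k_par * (k_gp * l_g * (1 * 1 * L * (c ^ l_g * P ^ l_g))
            + k_rp * l_r * (1 * 1 * L * (c ^ l_r * P ^ l_r)))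
          = Q * L / k_par * (k_gp * l_g * c ^ l_g * P ^ l_g
            + k_rp * l_r * c ^ l_r * P ^ l_r) := by ring
      rw [Real.norm_eq_abs, hrw, abs_le]
      constructor
      · linarith
      · linarith
    have key := (convex_Icc Phat P).norm_image_sub_le_of_norm_hasDerivWithin_le
      (fun t ht => (hderiv t ht).hasDerivWithinAt) hbound
      (left_mem_Icc.2 hle) (right_mem_Icc.2 hle)
    rw [Real.norm_eq_abs, Real.norm_eq_abs, abs_of_nonneg (sub_nonneg.2 hle)] at key
    exact key

theorem stmt_11 (Q L k_par k_go k_ro k_gp k_rp l_g l_r c : ℝ)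
    (hQ : 0 ≤ Q) (hL : 0 < L) (hkpar : 0 < k_par)
    (hkgo : 0 < k_go) (hkro : 0 < k_ro) (hkgp : 0 < k_gp) (hkrp : 0 < k_rp)
    (hlg0 : 0 < l_g) (hlg1 : l_g < 1) (hlr0 : 0 < l_r) (hlr1 : l_r < 1) (hc : 0 < c) :
    ∀ x ∈ Icc (0 : ℝ) L, ∀ P Phat : ℝ, 0 ≤ P → 0 ≤ Phat →
      |P * (1 - Real.exp (-(Q * (Real.exp (-(k_go + k_gp * (c * P) ^ l_g) * x)
            + Real.exp (-(k_ro + k_rp * (c * P) ^ l_r) * x))) / k_par))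
        - Phat * (1 - Real.exp (-(Q * (Real.exp (-(k_go + k_gp * (c * Phat) ^ l_g) * x)
            + Real.exp (-(k_ro + k_rp * (c * Phat) ^ l_r) * x))) / k_par))| ≤
      (1 + Q * L / k_par *
          (k_gp * l_g * c ^ l_g * (max P Phat) ^ l_g
            + k_rp * l_r * c ^ l_r * (max P Phat) ^ l_r)) * |P - Phat| := by
  intro x hx P Phat hP hPhat
  rcases le_total Phat P with hle | hle
  · rw [max_eq_left hle, abs_of_nonneg (sub_nonneg.2 hle)]
    exact aux_11 Q L k_par k_go k_ro k_gp k_rp l_g l_r c hQ hL hkpar hkgo hkro hkgp hkrp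
      hlg0 hlr0 hc x hx P Phat hP hPhat hle
  · rw [max_eq_right hle, abs_sub_comm P Phat, abs_sub_comm,
      abs_of_nonneg (sub_nonneg.2 hle)]
    exact aux_11 Q L k_par k_go k_ro k_gp k_rp l_g l_r c hQ hL hkpar hkgo hkro hkgp hkrp
      hlg0 hlr0 hc x hx Phat P hPhat hP hle
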